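/- arXiv:2404.11126 — 4 statements merged into one kernel-verified Lean document; each statement's English description precedes it below -/
import Mathlib

section
/- Let G > 2 and let α_g = (cos θ_g, sin θ_g) for g = 1,…,G with 0 ≤ θ_1 < θ_2 < ⋯ < θ_G < 2π be distinct unit directions, let h > 0 and T > 0. Then there exist a point r₀ ∈ Ω_T(hα_1) and ρ > 0 such that the open ball B_ρ(r₀) is contained in Ω_T(hα_1) and disjoint from Ω_T(hα_g) for all g ≠ 1; in particular ω(r) = 1 for all r ∈ B_ρ(r₀). -/
theorem stmt_3 (T h : ℝ) (hT : 0 < T) (hh : 0 < h) (G : ℕ) (hG : 2 < G)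
    (θ : Fin G → ℝ) (hθmono : StrictMono θ)
    (hθrange : ∀ g, θ g ∈ Set.Ico 0 (2 * Real.pi))
    (α : Fin G → EuclideanSpace ℝ (Fin 2))
    (hα : ∀ g, α g 0 = Real.cos (θ g) ∧ α g 1 = Real.sin (θ g)) :
    ∃ (r₀ : EuclideanSpace ℝ (Fin 2)) (ρ : ℝ), 0 < ρ ∧
      Metric.ball r₀ ρ ⊆ Metric.closedBall (h • α ⟨0, by omega⟩) T ∧
      (∀ g, g ≠ (⟨0, by omega⟩ : Fin G) →
        Disjoint (Metric.ball r₀ ρ) (Metric.closedBall (h • α g) T)) ∧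
      ∀ r ∈ Metric.ball r₀ ρ,
        (∑ g : Fin G, (Metric.closedBall (h • α g) T).indicator (fun _ => (1 : ℕ)) r) = 1 := by
  set g0 : Fin G := ⟨0, by omega⟩ with hg0
  have hπ := Real.pi_pos
  -- norm of α g is 1
  have hnorm : ∀ g, ‖α g‖ = 1 := by
    intro g
    rw [EuclideanSpace.norm_eq, Fin.sum_univ_two, (hα g).1, (hα g).2]
    simp only [Real.norm_eq_abs, sq_abs]
    rw [Real.cos_sq_add_sin_sq, Real.sqrt_one]
  -- key distance bound at the boundary point p
  set p : EuclideanSpace ℝ (Fin 2) := (h + T) • α g0 with hp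
  have key : ∀ g, g ≠ g0 → T < dist p (h • α g) := by
    intro g hg
    have hcos : Real.cos (θ g - θ g0) < 1 := by
      refine lt_of_le_of_ne (Real.cos_le_one _) ?_
      have h1 := hθrange g
      have h2 := hθrange g0
      have hne : θ g - θ g0 ≠ 0 := by
        intro hzero
        exact hg (hθmono.injective (by linarith [sub_eq_zero.mp hzero]))
      intro hone
      exact hne ((Real.cos_eq_one_iff_of_lt_of_lt (by linarith [h1.1, h1.2, h2.1, h2.2])
        (by linarith [h1.1, h1.2, h2.1, h2.2])).mp hone)
    have hinner : α g 0 * α g0 0 + α g 1 * α g0 1 < 1 := by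
      rw [(hα g).1, (hα g).2, (hα g0).1, (hα g0).2]
      calc Real.cos (θ g) * Real.cos (θ g0) + Real.sin (θ g) * Real.sin (θ g0)
          = Real.cos (θ g - θ g0) := (Real.cos_sub _ _).symm
        _ < 1 := hcos
    have hsq1 : α g0 0 ^ 2 + α g0 1 ^ 2 = 1 := by
      rw [(hα g0).1, (hα g0).2, Real.cos_sq_add_sin_sq]
    have hsq2 : α g 0 ^ 2 + α g 1 ^ 2 = 1 := by
      rw [(hα g).1, (hα g).2, Real.cos_sq_add_sin_sq]
    rw [EuclideanSpace.dist_eq, Fin.sum_univ_two]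
    have hcoord : ∀ i, p i = (h + T) * α g0 i := fun i => rfl
    have hcoord2 : ∀ i, (h • α g) i = h * α g i := fun i => rfl
    rw [Real.lt_sqrt hT.le]
    simp only [Real.dist_eq, sq_abs, hcoord, hcoord2]
    have hkey : 0 < h * (h + T) * (1 - (α g 0 * α g0 0 + α g 1 * α g0 1)) :=
      mul_pos (mul_pos hh (by linarith)) (by linarith)
    have hexp : ((h + T) * α g0 0 - h * α g 0) ^ 2 + ((h + T) * α g0 1 - h * α g 1) ^ 2
        = (h + T) ^ 2 * (α g0 0 ^ 2 + α g0 1 ^ 2) + h ^ 2 * (α g 0 ^ 2 + α g 1 ^ 2)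
          - 2 * h * (h + T) * (α g 0 * α g0 0 + α g 1 * α g0 1) := by ring
    rw [hsq1, hsq2] at hexp
    nlinarith [hkey, hexp]
  -- minimum gap δ
  have hne : (Finset.univ.erase g0).Nonempty := by
    refine ⟨⟨1, by omega⟩, Finset.mem_erase.mpr ⟨?_, Finset.mem_univ _⟩⟩
    simp [hg0, Fin.ext_iff]
  set δ : ℝ := (Finset.univ.erase g0).inf' hne (fun g => dist p (h • α g)) - T with hδ
  have hδpos : 0 < δ := by
    have := Finset.lt_inf'_iff hne (f := fun g => dist p (h • α g)) (a := T)
    have hlt : T < (Finset.univ.erase g0).inf' hne (fun g => dist p (h • α g)) := by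
      rw [this]
      intro g hg
      exact key g (Finset.mem_erase.mp hg).1
    linarith
  have hδle : ∀ g, g ≠ g0 → T + δ ≤ dist p (h • α g) := by
    intro g hg
    have : (Finset.univ.erase g0).inf' hne (fun g => dist p (h • α g)) ≤ dist p (h • α g) :=
      Finset.inf'_le _ (Finset.mem_erase.mpr ⟨hg, Finset.mem_univ _⟩)
    simp only [hδ]; linarith
  set ε : ℝ := min δ T with hε
  have hεpos : 0 < ε := lt_min hδpos hT
  have hεδ : ε ≤ δ := min_le_left _ _
  have hεT : ε ≤ T := min_le_right _ _
  refine ⟨(h + T - ε / 2) • α g0, ε / 4, by linarith, ?_, ?_, ?_⟩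
  · -- ball ⊆ closedBall (h • α g0) T
    intro r hr
    rw [Metric.mem_ball] at hr
    rw [Metric.mem_closedBall]
    have hd : dist ((h + T - ε / 2) • α g0) (h • α g0) = T - ε / 2 := by
      rw [dist_eq_norm, ← sub_smul, norm_smul, hnorm, mul_one]
      rw [show h + T - ε / 2 - h = T - ε / 2 by ring, Real.norm_eq_abs, abs_of_nonneg (by linarith)]
    calc dist r (h • α g0) ≤ dist r ((h + T - ε / 2) • α g0) + dist ((h + T - ε / 2) • α g0) (h • α g0) :=
          dist_triangle _ _ _
      _ ≤ ε / 4 + (T - ε / 2) := by rw [hd]; linarith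
      _ ≤ T := by linarith
  · -- disjointness
    intro g hg
    rw [Set.disjoint_left]
    intro r hr hr'
    rw [Metric.mem_ball] at hr
    rw [Metric.mem_closedBall] at hr'
    have hd : dist p ((h + T - ε / 2) • α g0) = ε / 2 := by
      rw [hp, dist_eq_norm, ← sub_smul, norm_smul, hnorm, mul_one]
      rw [show h + T - (h + T - ε / 2) = ε / 2 by ring, Real.norm_eq_abs,
        abs_of_nonneg (by linarith)]
    have h1 : dist p (h • α g) ≤ dist p ((h + T - ε / 2) • α g0) + dist ((h + T - ε / 2) • α g0) r
        + dist r (h • α g) := dist_triangle4 _ _ _ _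
    have h2 := hδle g hg
    rw [hd, dist_comm ((h + T - ε / 2) • α g0) r] at h1
    linarith
  · -- sum of indicators
    intro r hr
    rw [Finset.sum_eq_single_of_mem g0 (Finset.mem_univ _)]
    · rw [Set.indicator_of_mem]
      have : Metric.ball ((h + T - ε / 2) • α g0) (ε / 4) ⊆
          Metric.closedBall (h • α g0) T := by
        intro x hx
        rw [Metric.mem_ball] at hx
        rw [Metric.mem_closedBall]
        have hd : dist ((h + T - ε / 2) • α g0) (h • α g0) = T - ε / 2 := by
          rw [dist_eq_norm, ← sub_smul, norm_smul, hnorm, mul_one]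
          rw [show h + T - ε / 2 - h = T - ε / 2 by ring, Real.norm_eq_abs,
            abs_of_nonneg (by linarith)]
        calc dist x (h • α g0) ≤ dist x ((h + T - ε / 2) • α g0)
              + dist ((h + T - ε / 2) • α g0) (h • α g0) := dist_triangle _ _ _
          _ ≤ ε / 4 + (T - ε / 2) := by rw [hd]; linarith [hx]
          _ ≤ T := by linarith
      exact this hr
    · intro g _ hg
      rw [Set.indicator_of_notMem]
      rw [Metric.mem_closedBall]
      push_neg
      rw [Metric.mem_ball] at hr
      have hd : dist p ((h + T - ε / 2) • α g0) = ε / 2 := by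
        rw [hp, dist_eq_norm, ← sub_smul, norm_smul, hnorm, mul_one]
        rw [show h + T - (h + T - ε / 2) = ε / 2 by ring, Real.norm_eq_abs,
          abs_of_nonneg (by linarith)]
      have h1 : dist p (h • α g) ≤ dist p ((h + T - ε / 2) • α g0)
          + dist ((h + T - ε / 2) • α g0) r + dist r (h • α g) := dist_triangle4 _ _ _ _
      have h2 := hδle g hg
      rw [hd, dist_comm ((h + T - ε / 2) • α g0) r] at h1
      linarith
end

section
/- Let B ⊂ Ω_T(h₁α) be a set on which the overlap function ω₁ equals 1 everywhere (with direction α among α₁,…,α_G), define Ω̄_T = {r ∈ Ω_T : r + h₁α ∈ B}, and for each layer l define Ω̄^l = {r + h_l α : r ∈ Ω̄_T}. Then for all l = 1,…,L and all points p ∈ Ω̄^l, the overlap function at height h_l satisfies ω_l(p) = 1, i.e., p ∈ Ω_T(h_l α) but p ∉ Ω_T(h_l α_g) for every direction α_g ≠ α. -/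
theorem stmt_4 (T : ℝ) (hT : 0 < T) (G L : ℕ) (hL : 0 < L)
    (α : Fin G → EuclideanSpace ℝ (Fin 2)) (hunit : ∀ g, ‖α g‖ = 1)
    (hinj : Function.Injective α)
    (h : Fin L → ℝ) (hpos : ∀ l, 0 < h l) (hmono : StrictMono h)
    (g₀ : Fin G)
    (B : Set (EuclideanSpace ℝ (Fin 2)))
    (hB₁ : B ⊆ Metric.closedBall ((h ⟨0, hL⟩) • α g₀) T)
    (hB₂ : ∀ r ∈ B, ∀ g, g ≠ g₀ → r ∉ Metric.closedBall ((h ⟨0, hL⟩) • α g) T)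
    (ΩbarT : Set (EuclideanSpace ℝ (Fin 2)))
    (hΩbarT : ΩbarT = {r ∈ Metric.closedBall (0 : EuclideanSpace ℝ (Fin 2)) T |
      r + (h ⟨0, hL⟩) • α g₀ ∈ B}) :
    ∀ l : Fin L, ∀ p ∈ (fun r => r + (h l) • α g₀) '' ΩbarT,
      p ∈ Metric.closedBall ((h l) • α g₀) T ∧
      ∀ g, g ≠ g₀ → p ∉ Metric.closedBall ((h l) • α g) T := by
  intro l p hp
  obtain ⟨r, hr, rfl⟩ := hp
  rw [hΩbarT] at hr
  obtain ⟨hr1, hr2⟩ := hr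
  have hrT : ‖r‖ ≤ T := by simpa using hr1
  constructor
  · simp only [Metric.mem_closedBall, dist_eq_norm]
    simpa using hrT
  · intro g hg hmem
    apply hB₂ _ hr2 g hg
    simp only [Metric.mem_closedBall, dist_eq_norm] at hmem ⊢
    set h0 := h ⟨0, hL⟩ with hh0
    have hl0 : h0 ≤ h l := hmono.monotone (by exact Fin.mk_le_of_le_val (Nat.zero_le _))
    have hlpos : 0 < h l := hpos l
    set t : ℝ := h0 / h l with ht
    have ht0 : 0 ≤ t := div_nonneg (hpos _).le hlpos.le
    have ht1 : t ≤ 1 := div_le_one_of_le₀ hl0 hlpos.le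
    have hth : t * h l = h0 := div_mul_cancel₀ _ hlpos.ne'
    have key : r + h0 • α g₀ - h0 • α g
        = (1 - t) • r + t • (r + h l • α g₀ - h l • α g) := by
      rw [smul_sub, smul_add, smul_smul, smul_smul, hth]
      module
    calc ‖r + h0 • α g₀ - h0 • α g‖
        ≤ (1 - t) * ‖r‖ + t * ‖r + h l • α g₀ - h l • α g‖ := by
          rw [key]
          refine (norm_add_le _ _).trans ?_
          rw [norm_smul, norm_smul, Real.norm_eq_abs, Real.norm_eq_abs,
            abs_of_nonneg (by linarith), abs_of_nonneg ht0]
      _ ≤ (1 - t) * T + t * T := by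
          gcongr <;> linarith
      _ = T := by ring
end

section
/- Assume L > 1, G ≥ 1, distinct unit directions α₁,…,α_G and heights 0 < h₁ < ⋯ < h_L, and assume there exists a nonempty open set B ⊂ Ω_T(h₁α_{g₀}) with ω₁ ≡ 1 on B. Then the atmospheric tomography operator A is not injective: there exist Φ ≠ Φ̃ in ⊕_l L²(Ω_l) with AΦ = AΦ̃. Explicitly, one may modify Φ₁ arbitrarily (in L²) on the translated set Ω̄^1 and compensate on Ω̄^L by Φ̃_L(r + h_L α_{g₀}) = φ_{g₀}(r) − Σ_{l=1}^{L−1} Φ̃_l(r + h_l α_{g₀}), leaving all data φ_g unchanged. -/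
open MeasureTheory

private lemma seg_norm_le {E : Type*} [NormedAddCommGroup E] [NormedSpace ℝ E]
    (r v : E) (T s H : ℝ) (hs : 0 ≤ s) (hsH : s ≤ H) (hH : 0 < H)
    (h1 : ‖r‖ ≤ T) (h2 : ‖r + H • v‖ ≤ T) : ‖r + s • v‖ ≤ T := by
  have ht : r + s • v = (1 - s / H) • r + (s / H) • (r + H • v) := by
    match_scalars <;> field_simp <;> ring
  have h0 : 0 ≤ s / H := div_nonneg hs hH.le
  have h1' : s / H ≤ 1 := (div_le_one hH).mpr hsH
  calc ‖r + s • v‖ ≤ ‖(1 - s / H) • r‖ + ‖(s / H) • (r + H • v)‖ := by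
        rw [ht]; exact norm_add_le _ _
    _ = (1 - s / H) * ‖r‖ + (s / H) * ‖r + H • v‖ := by
        rw [norm_smul, norm_smul, Real.norm_eq_abs, Real.norm_eq_abs,
          abs_of_nonneg (by linarith), abs_of_nonneg h0]
    _ ≤ (1 - s / H) * T + (s / H) * T := by
        have := norm_nonneg r
        nlinarith
    _ = T := by ring

theorem stmt_7 (T : ℝ) (hT : 0 < T) (G L : ℕ) (hG : 0 < G) (hL : 1 < L)
    (α : Fin G → EuclideanSpace ℝ (Fin 2)) (hunit : ∀ g, ‖α g‖ = 1)
    (hinj : Function.Injective α)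
    (h : Fin L → ℝ) (hpos : ∀ l, 0 < h l) (hmono : StrictMono h)
    (g₀ : Fin G)
    (B : Set (EuclideanSpace ℝ (Fin 2))) (hBne : B.Nonempty) (hBopen : IsOpen B)
    (hB₁ : B ⊆ Metric.closedBall ((h ⟨0, by omega⟩) • α g₀) T)
    (hB₂ : ∀ r ∈ B, ∀ g, g ≠ g₀ → r ∉ Metric.closedBall ((h ⟨0, by omega⟩) • α g) T) :
    ∀ Φ : Fin L → EuclideanSpace ℝ (Fin 2) → ℝ,
      ∃ Φt : Fin L → EuclideanSpace ℝ (Fin 2) → ℝ,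
        -- Φ and Φ̃ differ on a set of positive measure inside some Ω_l, i.e. Φ ≠ Φ̃ in ⊕ L²(Ω_l)
        (∃ l : Fin L, 0 < volume {r ∈ ⋃ g : Fin G, Metric.closedBall ((h l) • α g) T |
          Φ l r ≠ Φt l r}) ∧
        -- but both atmospheres produce exactly the same data
        (∀ g : Fin G, ∀ r ∈ Metric.closedBall (0 : EuclideanSpace ℝ (Fin 2)) T,
          (∑ l : Fin L, Φ l (r + (h l) • α g)) = ∑ l : Fin L, Φt l (r + (h l) • α g)) := by
  classical
  intro Φ
  set lo : Fin L := ⟨0, by omega⟩ with hlo_def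
  set hi : Fin L := ⟨L - 1, by omega⟩ with hhi_def
  have hne : lo ≠ hi := Fin.ne_of_val_ne (by show (0 : ℕ) ≠ L - 1; omega)
  have hlthi : h lo < h hi := hmono (Fin.lt_def.mpr (by show (0 : ℕ) < L - 1; omega))
  set c : EuclideanSpace ℝ (Fin 2) := (h hi - h lo) • α g₀ with hc_def
  refine ⟨fun l x => Φ l x + (if l = lo then (if x ∈ B then (1 : ℝ) else 0) else 0)
      - (if l = hi then (if x - c ∈ B then (1 : ℝ) else 0) else 0), ?_, ?_⟩
  · refine ⟨lo, ?_⟩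
    have hsub : B ⊆ {r ∈ ⋃ g : Fin G, Metric.closedBall ((h lo) • α g) T |
        Φ lo r ≠ Φ lo r + (if lo = lo then (if r ∈ B then (1 : ℝ) else 0) else 0)
          - (if lo = hi then (if r - c ∈ B then (1 : ℝ) else 0) else 0)} := by
      intro b hb
      refine ⟨Set.mem_iUnion.mpr ⟨g₀, hB₁ hb⟩, ?_⟩
      simp [hne, hb]
    calc (0 : ENNReal) < volume B := hBopen.measure_pos volume hBne
      _ ≤ _ := measure_mono hsub
  · intro g r hr
    have hsplit : ∀ X : Fin L → EuclideanSpace ℝ (Fin 2),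
        (∑ l : Fin L, (Φ l (X l) + (if l = lo then (if X l ∈ B then (1 : ℝ) else 0) else 0)
          - (if l = hi then (if X l - c ∈ B then (1 : ℝ) else 0) else 0)))
        = (∑ l : Fin L, Φ l (X l)) + (if X lo ∈ B then (1 : ℝ) else 0)
          - (if X hi - c ∈ B then (1 : ℝ) else 0) := by
      intro X
      rw [Finset.sum_sub_distrib, Finset.sum_add_distrib,
        Finset.sum_ite_eq' Finset.univ lo (fun l => if X l ∈ B then (1 : ℝ) else 0),
        Finset.sum_ite_eq' Finset.univ hi (fun l => if X l - c ∈ B then (1 : ℝ) else 0)]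
      simp
    rw [hsplit (fun l => r + (h l) • α g)]
    have hrT : ‖r‖ ≤ T := by simpa using hr
    have key : (if r + (h lo) • α g ∈ B then (1 : ℝ) else 0)
        = (if (r + (h hi) • α g) - c ∈ B then (1 : ℝ) else 0) := by
      by_cases hg : g = g₀
      · subst hg
        have : (r + (h hi) • α g) - c = r + (h lo) • α g := by
          rw [hc_def]; module
        rw [this]
      · have hleft : r + (h lo) • α g ∉ B := by
          intro hmem
          exact hB₂ _ hmem g hg (by
            simp only [Metric.mem_closedBall, dist_eq_norm]
            simpa using hrT)
        have hright : (r + (h hi) • α g) - c ∉ B := by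
          intro hmem
          have h1 : ‖(r + (h hi) • α g) - c - (h lo) • α g₀‖ ≤ T := by
            have := hB₁ hmem
            simpa [dist_eq_norm] using this
          have h2 : ¬ ‖(r + (h hi) • α g) - c - (h lo) • α g‖ ≤ T := by
            have := hB₂ _ hmem g hg
            simpa [dist_eq_norm] using this
          apply h2
          have e1 : (r + (h hi) • α g) - c - (h lo) • α g
              = r + (h hi - h lo) • (α g - α g₀) := by
            rw [hc_def]; module
          have e2 : (r + (h hi) • α g) - c - (h lo) • α g₀
              = r + (h hi) • (α g - α g₀) := by
            rw [hc_def]; module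
          rw [e1]
          exact seg_norm_le r (α g - α g₀) T (h hi - h lo) (h hi)
            (by linarith) (by have := (hpos lo); linarith) (hpos hi) hrT
            (by rw [← e2]; exact h1)
        simp [hleft, hright]
    rw [key]
    ring
end

section
/- With the sets Ω̄^l = Ω̄_T + h_l α_g where ω_l ≡ 1 on Ω̄^l, the adjoint of the atmospheric tomography operator satisfies (A*φ)_l(r + h_l α_g) = γ_l φ_g(r) for every l = 1,…,L and every r ∈ Ω̄_T, where φ = (φ₁,…,φ_G). -/
theorem stmt_8 (T : ℝ) (hT : 0 < T) (G L : ℕ)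
    (α : Fin G → EuclideanSpace ℝ (Fin 2)) (hunit : ∀ g, ‖α g‖ = 1)
    (hinj : Function.Injective α)
    (h : Fin L → ℝ) (hpos : ∀ l, 0 < h l) (hmono : StrictMono h)
    (γ : Fin L → ℝ) (hγpos : ∀ l, 0 < γ l)
    (g : Fin G)
    (ΩbarT : Set (EuclideanSpace ℝ (Fin 2)))
    (hsub : ΩbarT ⊆ Metric.closedBall (0 : EuclideanSpace ℝ (Fin 2)) T)
    (hin : ∀ l : Fin L, ∀ r ∈ ΩbarT, r + (h l) • α g ∈ Metric.closedBall ((h l) • α g) T)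
    (hdisj : ∀ l : Fin L, ∀ g' : Fin G, g' ≠ g → ∀ r ∈ ΩbarT,
      r + (h l) • α g ∉ Metric.closedBall ((h l) • α g') T)
    (φ : Fin G → EuclideanSpace ℝ (Fin 2) → ℝ)
    (Astarφ : Fin L → EuclideanSpace ℝ (Fin 2) → ℝ)
    (hAstar : ∀ l r, Astarφ l r = ∑ g' : Fin G,
      γ l * (Metric.closedBall ((h l) • α g') T).indicator
        (fun s => φ g' (s - (h l) • α g')) r) :
    ∀ l : Fin L, ∀ r ∈ ΩbarT, Astarφ l (r + (h l) • α g) = γ l * φ g r := by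
  intro l r hr
  rw [hAstar]
  rw [Finset.sum_eq_single g]
  · rw [Set.indicator_of_mem (hin l r hr)]
    simp
  · intro g' _ hg'
    rw [Set.indicator_of_notMem (hdisj l g' hg' r hr), mul_zero]
  · simp
end
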